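/- arXiv:2204.08214 — 2 statements merged into one kernel-verified Lean document; each statement's English description precedes it below -/
import Mathlib

section
/- Let N_p ∈ ℕ, let ω_s > 0 for s = 1,…,N_p, let B₀ ∈ ℝ³ be a constant vector with b := |B₀| > 0 and hat matrix B̂₀, and let t ∈ ℝ. Define R(t) = I + (sin(bt)/b)·B̂₀ + ((1 − cos(bt))/b²)·B̂₀² and A(t) = t·I + ((1 − cos(bt))/b²)·B̂₀ + ((bt − sin(bt))/b³)·B̂₀², and the drift–rotation map ψ_t(X,V) = (X', V') with X'_s = X_s + A(t) V_s and V'_s = R(t) V_s for each s. Then ψ_t preserves the discrete particle bracket with constant field B₀: for all continuously differentiable F, G : (ℝ³)^{N_p} × (ℝ³)^{N_p} → ℝ and all (X,V), {F∘ψ_t, G∘ψ_t}(X,V) = {F,G}(ψ_t(X,V)). -/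
open Matrix
open scoped Matrix BigOperators

noncomputable section

/-- Phase space of `Np` particles in 3D: positions and velocities. -/
abbrev Phase (Np : ℕ) := (Fin Np → Fin 3 → ℝ) × (Fin Np → Fin 3 → ℝ)

/-- Gradient of `F` with respect to the position `X s` of the `s`-th particle. -/
def gradX {Np : ℕ} (F : Phase Np → ℝ) (Z : Phase Np) (s : Fin Np) : Fin 3 → ℝ :=
  fun i => fderiv ℝ F Z (Pi.single s (Pi.single i 1), 0)

/-- Gradient of `F` with respect to the velocity `V s` of the `s`-th particle. -/
def gradV {Np : ℕ} (F : Phase Np → ℝ) (Z : Phase Np) (s : Fin Np) : Fin 3 → ℝ :=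
  fun i => fderiv ℝ F Z (0, Pi.single s (Pi.single i 1))

/-- The discrete particle bracket with weights `ω` and constant magnetic field `B0`. -/
def pBracket {Np : ℕ} (ω : Fin Np → ℝ) (B0 : Fin 3 → ℝ)
    (F G : Phase Np → ℝ) (Z : Phase Np) : ℝ :=
  (∑ s, (1 / ω s) * (gradX F Z s ⬝ᵥ gradV G Z s - gradX G Z s ⬝ᵥ gradV F Z s)) +
    ∑ s, (1 / ω s) * (B0 ⬝ᵥ (gradV F Z s ⨯₃ gradV G Z s))

/-- The hat matrix of a vector `B ∈ ℝ³`, satisfying `B̂ v = v × B`. -/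
def hatMatrix (B : Fin 3 → ℝ) : Matrix (Fin 3) (Fin 3) ℝ :=
  !![0, B 2, -(B 1); -(B 2), 0, B 0; B 1, -(B 0), 0]

/-- The Euclidean norm of a vector in ℝ³. -/
def enorm3 (B : Fin 3 → ℝ) : ℝ := Real.sqrt (∑ i, B i ^ 2)

/-! ### Auxiliary lemmas about the hat matrix -/

lemma enorm3_sq (B : Fin 3 → ℝ) : (enorm3 B) ^ 2 = B 0 ^ 2 + B 1 ^ 2 + B 2 ^ 2 := by
  rw [enorm3, Real.sq_sqrt (by positivity)]
  simp [Fin.sum_univ_three]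

lemma hat_transpose (B : Fin 3 → ℝ) : (hatMatrix B)ᵀ = -hatMatrix B := by
  ext i j
  fin_cases i <;> fin_cases j <;> simp [hatMatrix]

lemma hat_cube (B : Fin 3 → ℝ) :
    hatMatrix B * (hatMatrix B * hatMatrix B) = (-(enorm3 B ^ 2)) • hatMatrix B := by
  rw [enorm3_sq]
  ext i j
  fin_cases i <;> fin_cases j <;>
    simp [hatMatrix, Matrix.mul_apply, Fin.sum_univ_three] <;> ring

lemma hat_cross (B v w : Fin 3 → ℝ) : B ⬝ᵥ (v ⨯₃ w) = v ⬝ᵥ (hatMatrix B) *ᵥ w := by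
  simp [cross_apply, hatMatrix, dotProduct, Matrix.mulVec, Fin.sum_univ_three]
  ring

/-! ### The key matrix identities for the rotation and drift matrices -/

set_option maxHeartbeats 1000000 in
lemma matrix_ids (B0 : Fin 3 → ℝ) (t : ℝ) (hb : 0 < enorm3 B0)
    (R A : Matrix (Fin 3) (Fin 3) ℝ)
    (hR : R = 1 + (Real.sin (enorm3 B0 * t) / enorm3 B0) • hatMatrix B0 +
      ((1 - Real.cos (enorm3 B0 * t)) / (enorm3 B0) ^ 2) • (hatMatrix B0 * hatMatrix B0))
    (hA : A = t • (1 : Matrix (Fin 3) (Fin 3) ℝ) +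
      ((1 - Real.cos (enorm3 B0 * t)) / (enorm3 B0) ^ 2) • hatMatrix B0 +
      ((enorm3 B0 * t - Real.sin (enorm3 B0 * t)) / (enorm3 B0) ^ 3) •
        (hatMatrix B0 * hatMatrix B0)) :
    R * Rᵀ = 1 ∧ A * hatMatrix B0 = R - 1 ∧ R * Aᵀ = A ∧
      R * (hatMatrix B0 * Rᵀ) = hatMatrix B0 := by
  have h3 := hat_cube B0
  have ht := hat_transpose B0
  set b := enorm3 B0 with hbdef
  set H := hatMatrix B0 with hHdef
  have hbne : b ≠ 0 := ne_of_gt hb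
  clear_value b H
  have hRt : Rᵀ = 1 - (Real.sin (b * t) / b) • H + ((1 - Real.cos (b * t)) / b ^ 2) • (H * H) := by
    rw [hR]
    simp only [transpose_add, transpose_smul, transpose_one, transpose_mul, ht,
      neg_mul_neg, smul_neg]
    module
  have hAt : Aᵀ = t • (1 : Matrix (Fin 3) (Fin 3) ℝ) - ((1 - Real.cos (b * t)) / b ^ 2) • H +
      ((b * t - Real.sin (b * t)) / b ^ 3) • (H * H) := by
    rw [hA]
    simp only [transpose_add, transpose_smul, transpose_one, transpose_mul, ht,
      neg_mul_neg, smul_neg]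
    module
  have hpy := Real.sin_sq_add_cos_sq (b * t)
  have hpy2 := Real.sin_sq_add_cos_sq (t * b)
  refine ⟨?_, ?_, ?_, ?_⟩
  · rw [hRt, hR]
    simp only [add_mul, mul_add, sub_mul, mul_sub, smul_mul_assoc, mul_smul_comm,
      one_mul, mul_one, smul_smul, mul_assoc, h3]
    match_scalars
    all_goals field_simp
    all_goals try ring
    all_goals try linear_combination (-(b^6:ℝ)) * hpy
    all_goals try linear_combination ((b:ℝ)^6) * hpy
    all_goals try linear_combination ((b:ℝ)^9) * hpy
    all_goals try linear_combination (-(b^9:ℝ)) * hpy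
    all_goals try linear_combination ((b:ℝ)^6) * hpy2
    all_goals try linear_combination (-(b^6:ℝ)) * hpy2
    all_goals try linear_combination ((b:ℝ)^9) * hpy2
    all_goals try linear_combination (-(b^9:ℝ)) * hpy2
    all_goals linear_combination (-1:ℝ) * hpy
  · rw [hR, hA]
    simp only [add_mul, mul_add, sub_mul, mul_sub, smul_mul_assoc, mul_smul_comm,
      one_mul, mul_one, smul_smul, mul_assoc, h3]
    match_scalars
    all_goals field_simp
    all_goals try ring
    all_goals try linear_combination (-(b^6:ℝ)) * hpy
    all_goals try linear_combination ((b:ℝ)^6) * hpy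
    all_goals try linear_combination ((b:ℝ)^9) * hpy
    all_goals try linear_combination (-(b^9:ℝ)) * hpy
    all_goals try linear_combination ((b:ℝ)^6) * hpy2
    all_goals try linear_combination (-(b^6:ℝ)) * hpy2
    all_goals try linear_combination ((b:ℝ)^9) * hpy2
    all_goals try linear_combination (-(b^9:ℝ)) * hpy2
  · rw [hAt, hR]
    conv_rhs => rw [hA]
    simp only [add_mul, mul_add, sub_mul, mul_sub, smul_mul_assoc, mul_smul_comm,
      one_mul, mul_one, smul_smul, mul_assoc, h3]
    match_scalars
    all_goals field_simp
    all_goals try ring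
    all_goals try linear_combination (-(b^6:ℝ)) * hpy
    all_goals try linear_combination ((b:ℝ)^6) * hpy
    all_goals try linear_combination ((b:ℝ)^9) * hpy
    all_goals try linear_combination (-(b^9:ℝ)) * hpy
    all_goals try linear_combination ((b:ℝ)^6) * hpy2
    all_goals try linear_combination (-(b^6:ℝ)) * hpy2
    all_goals try linear_combination ((b:ℝ)^9) * hpy2
    all_goals try linear_combination (-(b^9:ℝ)) * hpy2
    all_goals linear_combination hpy2
  · rw [hRt, hR]
    simp only [add_mul, mul_add, sub_mul, mul_sub, smul_mul_assoc, mul_smul_comm,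
      one_mul, mul_one, smul_smul, mul_assoc, h3]
    match_scalars
    all_goals field_simp
    all_goals try ring
    all_goals try linear_combination (-(b^6:ℝ)) * hpy
    all_goals try linear_combination ((b:ℝ)^6) * hpy
    all_goals try linear_combination ((b:ℝ)^9) * hpy
    all_goals try linear_combination (-(b^9:ℝ)) * hpy
    all_goals try linear_combination ((b:ℝ)^6) * hpy2
    all_goals try linear_combination (-(b^6:ℝ)) * hpy2
    all_goals try linear_combination ((b:ℝ)^9) * hpy2
    all_goals try linear_combination (-(b^9:ℝ)) * hpy2
    all_goals try linear_combination ((b:ℝ)^12) * hpy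
    all_goals try linear_combination (-(b^12:ℝ)) * hpy
    all_goals try linear_combination ((b:ℝ)^12) * hpy2
    all_goals try linear_combination (-(b^12:ℝ)) * hpy2
    all_goals try linear_combination ((b:ℝ)^8) * hpy
    all_goals try linear_combination (-(b^8:ℝ)) * hpy
    all_goals try linear_combination ((b:ℝ)^8) * hpy2
    all_goals try linear_combination (-(b^8:ℝ)) * hpy2
    all_goals linear_combination hpy

/-! ### The core pointwise algebraic identity -/

lemma dot_tA (M : Matrix (Fin 3) (Fin 3) ℝ) (u v : Fin 3 → ℝ) :
    (Mᵀ *ᵥ u) ⬝ᵥ v = u ⬝ᵥ M *ᵥ v := by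
  rw [Matrix.mulVec_transpose, ← Matrix.dotProduct_mulVec]

set_option maxHeartbeats 800000 in
lemma core_identity (B0 : Fin 3 → ℝ) (A R : Matrix (Fin 3) (Fin 3) ℝ)
    (h1 : R * Rᵀ = 1) (h2 : A * hatMatrix B0 = R - 1) (h3 : R * Aᵀ = A)
    (h4 : R * (hatMatrix B0 * Rᵀ) = hatMatrix B0)
    (a b c d : Fin 3 → ℝ) :
    a ⬝ᵥ (Aᵀ *ᵥ c + Rᵀ *ᵥ d) - c ⬝ᵥ (Aᵀ *ᵥ a + Rᵀ *ᵥ b)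
      + B0 ⬝ᵥ ((Aᵀ *ᵥ a + Rᵀ *ᵥ b) ⨯₃ (Aᵀ *ᵥ c + Rᵀ *ᵥ d))
    = (a ⬝ᵥ d - c ⬝ᵥ b) + B0 ⬝ᵥ (b ⨯₃ d) := by
  have ht : (hatMatrix B0)ᵀ = -hatMatrix B0 := hat_transpose B0
  set H := hatMatrix B0 with hHdef
  -- derived matrix facts
  have hHA : H * Aᵀ = 1 - Rᵀ := by
    have h2t := congrArg Matrix.transpose h2
    rw [transpose_mul, ht, transpose_sub, transpose_one, neg_mul] at h2t
    have h2t' : H * Aᵀ = -(Rᵀ - 1) := by rw [← h2t, neg_neg]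
    rw [h2t', neg_sub]
  have h3t := congrArg Matrix.transpose h3
  rw [transpose_mul, transpose_transpose] at h3t
  have f1 : A * (H * Aᵀ) = A - Aᵀ := by
    rw [hHA, mul_sub, mul_one, h3t]
  have f2 : A * (H * Rᵀ) = 1 - Rᵀ := by
    rw [← Matrix.mul_assoc, h2, sub_mul, one_mul, h1]
  have f3 : R * (H * Aᵀ) = R - 1 := by
    rw [hHA, mul_sub, mul_one, h1]
  -- scalar evaluations
  have E11 : (Aᵀ *ᵥ a) ⬝ᵥ (H *ᵥ (Aᵀ *ᵥ c)) = a ⬝ᵥ A *ᵥ c - a ⬝ᵥ Aᵀ *ᵥ c := by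
    rw [Matrix.mulVec_mulVec, dot_tA, Matrix.mulVec_mulVec, f1, Matrix.sub_mulVec,
      dotProduct_sub]
  have E12 : (Aᵀ *ᵥ a) ⬝ᵥ (H *ᵥ (Rᵀ *ᵥ d)) = a ⬝ᵥ d - a ⬝ᵥ Rᵀ *ᵥ d := by
    rw [Matrix.mulVec_mulVec, dot_tA, Matrix.mulVec_mulVec, f2, Matrix.sub_mulVec,
      dotProduct_sub, Matrix.one_mulVec]
  have E21 : (Rᵀ *ᵥ b) ⬝ᵥ (H *ᵥ (Aᵀ *ᵥ c)) = b ⬝ᵥ R *ᵥ c - b ⬝ᵥ c := by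
    rw [Matrix.mulVec_mulVec, dot_tA, Matrix.mulVec_mulVec, f3, Matrix.sub_mulVec,
      dotProduct_sub, Matrix.one_mulVec]
  have E22 : (Rᵀ *ᵥ b) ⬝ᵥ (H *ᵥ (Rᵀ *ᵥ d)) = b ⬝ᵥ H *ᵥ d := by
    rw [Matrix.mulVec_mulVec, dot_tA, Matrix.mulVec_mulVec, h4]
  have E5 : c ⬝ᵥ Aᵀ *ᵥ a = a ⬝ᵥ A *ᵥ c := by
    rw [dotProduct_comm, dot_tA]
  have E6 : c ⬝ᵥ Rᵀ *ᵥ b = b ⬝ᵥ R *ᵥ c := by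
    rw [dotProduct_comm, dot_tA]
  rw [hat_cross, hat_cross, ← hHdef]
  simp only [Matrix.mulVec_add, dotProduct_add, add_dotProduct]
  rw [E11, E12, E21, E22, E5, E6, dotProduct_comm b c]
  ring

/-! ### The drift–rotation map as a linear map, and gradients of compositions -/

/-- The drift-rotation map as a linear map. -/
def psiLin {Np : ℕ} (A R : Matrix (Fin 3) (Fin 3) ℝ) : Phase Np →ₗ[ℝ] Phase Np where
  toFun Z := (fun s => Z.1 s + A *ᵥ Z.2 s, fun s => R *ᵥ Z.2 s)
  map_add' Z W := by
    refine Prod.ext ?_ ?_ <;> funext s <;>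
      simp [Matrix.mulVec_add] <;> abel
  map_smul' c Z := by
    refine Prod.ext ?_ ?_ <;> funext s <;>
      simp [Matrix.mulVec_smul, smul_add]

lemma single_decomp {Np : ℕ} (s : Fin Np) (u : Fin 3 → ℝ) :
    Pi.single (M := fun _ : Fin Np => Fin 3 → ℝ) s u
      = ∑ j : Fin 3, u j • Pi.single (M := fun _ : Fin Np => Fin 3 → ℝ) s
          (Pi.single (M := fun _ : Fin 3 => ℝ) j 1) := by
  have : u = ∑ j : Fin 3, u j • Pi.single (M := fun _ : Fin 3 => ℝ) j 1 := by
    funext i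
    simp [Finset.sum_apply, Pi.single_apply]
  conv_lhs => rw [this]
  funext s'
  rcases eq_or_ne s' s with h | h
  · subst h; simp [Pi.single_eq_same, Finset.sum_apply]
  · simp [Pi.single_eq_of_ne h, Finset.sum_apply]

lemma mulVec_single_fun {Np : ℕ} (M : Matrix (Fin 3) (Fin 3) ℝ) (s : Fin Np) (v : Fin 3 → ℝ) :
    (fun s' => M *ᵥ (Pi.single (M := fun _ : Fin Np => Fin 3 → ℝ) s v s'))
      = Pi.single s (M *ᵥ v) := by
  funext s'
  rcases eq_or_ne s' s with h | h
  · subst h; simp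
  · simp [Pi.single_eq_of_ne h]

lemma fderiv_comp_psi {Np : ℕ} (A R : Matrix (Fin 3) (Fin 3) ℝ)
    (ψ : Phase Np → Phase Np)
    (hψ : ψ = fun Z => (fun s => Z.1 s + A.mulVec (Z.2 s), fun s => R.mulVec (Z.2 s)))
    (F : Phase Np → ℝ) (hF : ContDiff ℝ 1 F) (Z : Phase Np) :
    fderiv ℝ (F ∘ ψ) Z
      = (fderiv ℝ F (ψ Z)).comp ((psiLin A R).toContinuousLinearMap (𝕜 := ℝ)) := by
  have hcoe : ψ = ⇑((psiLin (Np := Np) A R).toContinuousLinearMap (𝕜 := ℝ)) := by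
    rw [hψ]; rfl
  rw [hcoe, fderiv_comp Z ((hF.differentiable one_ne_zero).differentiableAt)
    (((psiLin (Np := Np) A R).toContinuousLinearMap (𝕜 := ℝ)).differentiableAt),
    ContinuousLinearMap.fderiv]

lemma gradX_comp {Np : ℕ} (A R : Matrix (Fin 3) (Fin 3) ℝ)
    (ψ : Phase Np → Phase Np)
    (hψ : ψ = fun Z => (fun s => Z.1 s + A.mulVec (Z.2 s), fun s => R.mulVec (Z.2 s)))
    (F : Phase Np → ℝ) (hF : ContDiff ℝ 1 F) (Z : Phase Np) (s : Fin Np) :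
    gradX (F ∘ ψ) Z s = gradX F (ψ Z) s := by
  funext i
  simp only [gradX, fderiv_comp_psi A R ψ hψ F hF Z, ContinuousLinearMap.comp_apply]
  congr 1
  refine Prod.ext ?_ ?_ <;>
      simp [psiLin, LinearMap.coe_toContinuousLinearMap', Matrix.mulVec_zero] <;> rfl

lemma gradV_comp {Np : ℕ} (A R : Matrix (Fin 3) (Fin 3) ℝ)
    (ψ : Phase Np → Phase Np)
    (hψ : ψ = fun Z => (fun s => Z.1 s + A.mulVec (Z.2 s), fun s => R.mulVec (Z.2 s)))
    (F : Phase Np → ℝ) (hF : ContDiff ℝ 1 F) (Z : Phase Np) (s : Fin Np) :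
    gradV (F ∘ ψ) Z s = Aᵀ *ᵥ gradX F (ψ Z) s + Rᵀ *ᵥ gradV F (ψ Z) s := by
  funext i
  simp only [gradV, fderiv_comp_psi A R ψ hψ F hF Z, ContinuousLinearMap.comp_apply]
  have harg : ((psiLin A R).toContinuousLinearMap (𝕜 := ℝ))
        ((0 : Fin Np → Fin 3 → ℝ), Pi.single s (Pi.single i 1))
      = (Pi.single s (A *ᵥ Pi.single i 1), Pi.single s (R *ᵥ Pi.single i 1)) := by
    refine Prod.ext ?_ ?_ <;>
      simp [psiLin, LinearMap.coe_toContinuousLinearMap', mulVec_single_fun]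
  rw [harg]
  have hsplit : ((Pi.single s (A *ᵥ Pi.single i 1), Pi.single s (R *ᵥ Pi.single i 1)) : Phase Np)
      = (∑ j : Fin 3, (A *ᵥ Pi.single i 1) j •
          ((Pi.single s (Pi.single (M := fun _ : Fin 3 => ℝ) j 1), 0) : Phase Np))
        + ∑ j : Fin 3, (R *ᵥ Pi.single i 1) j •
          ((0, Pi.single s (Pi.single (M := fun _ : Fin 3 => ℝ) j 1)) : Phase Np) := by
    refine Prod.ext ?_ ?_ <;>
      simp [Prod.fst_sum, Prod.snd_sum, smul_zero, Finset.sum_const_zero, ← single_decomp] <;> rfl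
  rw [hsplit, map_add, map_sum, map_sum]
  simp only [_root_.map_smul, smul_eq_mul]
  simp [gradX, gradV, Matrix.mulVec, dotProduct, Matrix.transpose_apply, Pi.single_apply,
    mul_comm]

/-- The drift–rotation map (exact flow of the kinetic subsystem) preserves the discrete
particle bracket with constant magnetic field `B0`. -/
theorem drift_rotation_preserves_bracket {Np : ℕ}
    (ω : Fin Np → ℝ) (hω : ∀ s, 0 < ω s)
    (B0 : Fin 3 → ℝ) (hb : 0 < enorm3 B0) (t : ℝ)
    (R A : Matrix (Fin 3) (Fin 3) ℝ)
    (hR : R = 1 + (Real.sin (enorm3 B0 * t) / enorm3 B0) • hatMatrix B0 +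
      ((1 - Real.cos (enorm3 B0 * t)) / (enorm3 B0) ^ 2) • (hatMatrix B0 * hatMatrix B0))
    (hA : A = t • (1 : Matrix (Fin 3) (Fin 3) ℝ) +
      ((1 - Real.cos (enorm3 B0 * t)) / (enorm3 B0) ^ 2) • hatMatrix B0 +
      ((enorm3 B0 * t - Real.sin (enorm3 B0 * t)) / (enorm3 B0) ^ 3) •
        (hatMatrix B0 * hatMatrix B0))
    (ψ : Phase Np → Phase Np)
    (hψ : ψ = fun Z => (fun s => Z.1 s + A.mulVec (Z.2 s), fun s => R.mulVec (Z.2 s)))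
    (F G : Phase Np → ℝ) (hF : ContDiff ℝ 1 F) (hG : ContDiff ℝ 1 G) (Z : Phase Np) :
    pBracket ω B0 (F ∘ ψ) (G ∘ ψ) Z = pBracket ω B0 F G (ψ Z) := by
  obtain ⟨h1, h2, h3, h4⟩ := matrix_ids B0 t hb R A hR hA
  rw [pBracket, pBracket, ← Finset.sum_add_distrib, ← Finset.sum_add_distrib]
  refine Finset.sum_congr rfl fun s _ => ?_
  rw [gradX_comp A R ψ hψ F hF Z s, gradX_comp A R ψ hψ G hG Z s,
    gradV_comp A R ψ hψ F hF Z s, gradV_comp A R ψ hψ G hG Z s]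
  have hcore := core_identity B0 A R h1 h2 h3 h4
    (gradX F (ψ Z) s) (gradV F (ψ Z) s) (gradX G (ψ Z) s) (gradV G (ψ Z) s)
  linear_combination (1 / ω s) * hcore

end
end

section
/- Let B ∈ ℝ³ be a fixed vector and let a, b, c : ℝ³ → ℝ be twice continuously differentiable. Then at every point v ∈ ℝ³, the cyclic sum B · ( ∇(B · (∇a × ∇b))(v) × ∇c(v) ) + B · ( ∇(B · (∇b × ∇c))(v) × ∇a(v) ) + B · ( ∇(B · (∇c × ∇a))(v) × ∇b(v) ) = 0, where ∇ denotes the gradient in v. -/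
open Matrix
open scoped Matrix BigOperators

noncomputable section

/-- Gradient of a function on ℝ³ (vector of partial derivatives). -/
def grad3 (f : (Fin 3 → ℝ) → ℝ) (v : Fin 3 → ℝ) : Fin 3 → ℝ :=
  fun i => fderiv ℝ f v (Pi.single i 1)

private lemma hasFDerivAt_partial {f : (Fin 3 → ℝ) → ℝ} (hf : ContDiff ℝ 2 f)
    (v : Fin 3 → ℝ) (i : Fin 3) :
    HasFDerivAt (fun w => fderiv ℝ f w (Pi.single i 1))
      ((ContinuousLinearMap.apply ℝ ℝ (Pi.single i 1 : Fin 3 → ℝ)).comp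
        (fderiv ℝ (fderiv ℝ f) v)) v := by
  have h1 : HasFDerivAt (fderiv ℝ f) (fderiv ℝ (fderiv ℝ f) v) v :=
    (((hf.fderiv_right (m := 1) (by norm_num)).differentiable one_ne_zero) v).hasFDerivAt
  exact (ContinuousLinearMap.apply ℝ ℝ _).hasFDerivAt.comp v h1

private lemma grad3_magnetic {B : Fin 3 → ℝ} {a b : (Fin 3 → ℝ) → ℝ}
    (ha : ContDiff ℝ 2 a) (hb : ContDiff ℝ 2 b) (v : Fin 3 → ℝ) (k : Fin 3) :
    grad3 (fun w => B ⬝ᵥ (grad3 a w ⨯₃ grad3 b w)) v k =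
      B 0 * ((fderiv ℝ (fderiv ℝ a) v (Pi.single k 1) (Pi.single 1 1)) * grad3 b v 2
           + grad3 a v 1 * (fderiv ℝ (fderiv ℝ b) v (Pi.single k 1) (Pi.single 2 1))
           - (fderiv ℝ (fderiv ℝ a) v (Pi.single k 1) (Pi.single 2 1)) * grad3 b v 1
           - grad3 a v 2 * (fderiv ℝ (fderiv ℝ b) v (Pi.single k 1) (Pi.single 1 1)))
    + B 1 * ((fderiv ℝ (fderiv ℝ a) v (Pi.single k 1) (Pi.single 2 1)) * grad3 b v 0
           + grad3 a v 2 * (fderiv ℝ (fderiv ℝ b) v (Pi.single k 1) (Pi.single 0 1))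
           - (fderiv ℝ (fderiv ℝ a) v (Pi.single k 1) (Pi.single 0 1)) * grad3 b v 2
           - grad3 a v 0 * (fderiv ℝ (fderiv ℝ b) v (Pi.single k 1) (Pi.single 2 1)))
    + B 2 * ((fderiv ℝ (fderiv ℝ a) v (Pi.single k 1) (Pi.single 0 1)) * grad3 b v 1
           + grad3 a v 0 * (fderiv ℝ (fderiv ℝ b) v (Pi.single k 1) (Pi.single 1 1))
           - (fderiv ℝ (fderiv ℝ a) v (Pi.single k 1) (Pi.single 1 1)) * grad3 b v 0
           - grad3 a v 1 * (fderiv ℝ (fderiv ℝ b) v (Pi.single k 1) (Pi.single 0 1))) := by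
  have hfun : (fun w => B ⬝ᵥ (grad3 a w ⨯₃ grad3 b w)) = fun w =>
      B 0 * (fderiv ℝ a w (Pi.single 1 1) * fderiv ℝ b w (Pi.single 2 1)
           - fderiv ℝ a w (Pi.single 2 1) * fderiv ℝ b w (Pi.single 1 1))
    + B 1 * (fderiv ℝ a w (Pi.single 2 1) * fderiv ℝ b w (Pi.single 0 1)
           - fderiv ℝ a w (Pi.single 0 1) * fderiv ℝ b w (Pi.single 2 1))
    + B 2 * (fderiv ℝ a w (Pi.single 0 1) * fderiv ℝ b w (Pi.single 1 1)
           - fderiv ℝ a w (Pi.single 1 1) * fderiv ℝ b w (Pi.single 0 1)) := by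
    funext w
    simp [grad3, crossProduct, dotProduct, Fin.sum_univ_three]
  have Ha := fun i => hasFDerivAt_partial ha v i
  have Hb := fun i => hasFDerivAt_partial hb v i
  have H := (((((Ha 1).mul (Hb 2)).sub ((Ha 2).mul (Hb 1))).const_mul (B 0)).add
      ((((Ha 2).mul (Hb 0)).sub ((Ha 0).mul (Hb 2))).const_mul (B 1))).add
      ((((Ha 0).mul (Hb 1)).sub ((Ha 1).mul (Hb 0))).const_mul (B 2))
  replace H := H.congr_of_eventuallyEq
    (Filter.Eventually.of_forall fun w => by rw [hfun]; rfl :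
      (fun w => B ⬝ᵥ (grad3 a w ⨯₃ grad3 b w)) =ᶠ[nhds v] _)
  show fderiv ℝ _ v (Pi.single k 1) = _
  rw [H.fderiv]
  simp only [ContinuousLinearMap.add_apply, ContinuousLinearMap.sub_apply,
    ContinuousLinearMap.smul_apply, ContinuousLinearMap.coe_comp', Function.comp_apply,
    ContinuousLinearMap.apply_apply, smul_eq_mul, ContinuousLinearMap.coe_smul',
    Pi.smul_apply]
  simp only [grad3]
  ring
set_option maxHeartbeats 2000000 in
/-- The purely magnetic part of the bracket contributes zero to the cyclic Jacobi sum. -/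
theorem magnetic_cyclic_sum_zero
    (B : Fin 3 → ℝ) (a b c : (Fin 3 → ℝ) → ℝ)
    (ha : ContDiff ℝ 2 a) (hb : ContDiff ℝ 2 b) (hc : ContDiff ℝ 2 c)
    (v : Fin 3 → ℝ) :
    B ⬝ᵥ (grad3 (fun w => B ⬝ᵥ (grad3 a w ⨯₃ grad3 b w)) v ⨯₃ grad3 c v) +
      B ⬝ᵥ (grad3 (fun w => B ⬝ᵥ (grad3 b w ⨯₃ grad3 c w)) v ⨯₃ grad3 a v) +
      B ⬝ᵥ (grad3 (fun w => B ⬝ᵥ (grad3 c w ⨯₃ grad3 a w)) v ⨯₃ grad3 b v) = 0 := by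
  have hd : ∀ (X Y : Fin 3 → ℝ), B ⬝ᵥ (X ⨯₃ Y) =
      B 0 * (X 1 * Y 2 - X 2 * Y 1) + B 1 * (X 2 * Y 0 - X 0 * Y 2)
        + B 2 * (X 0 * Y 1 - X 1 * Y 0) := by
    intro X Y
    simp [crossProduct, dotProduct, Fin.sum_univ_three]
  rw [hd, hd, hd]
  rw [grad3_magnetic ha hb v 0, grad3_magnetic ha hb v 1, grad3_magnetic ha hb v 2,
    grad3_magnetic hb hc v 0, grad3_magnetic hb hc v 1, grad3_magnetic hb hc v 2,
    grad3_magnetic hc ha v 0, grad3_magnetic hc ha v 1, grad3_magnetic hc ha v 2]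
  have sa := ha.contDiffAt.isSymmSndFDerivAt (x := v) (by norm_num)
  have sb := hb.contDiffAt.isSymmSndFDerivAt (x := v) (by norm_num)
  have sc := hc.contDiffAt.isSymmSndFDerivAt (x := v) (by norm_num)
  rw [sa (Pi.single 1 1) (Pi.single 0 1), sa (Pi.single 2 1) (Pi.single 0 1),
    sa (Pi.single 2 1) (Pi.single 1 1),
    sb (Pi.single 1 1) (Pi.single 0 1), sb (Pi.single 2 1) (Pi.single 0 1),
    sb (Pi.single 2 1) (Pi.single 1 1),
    sc (Pi.single 1 1) (Pi.single 0 1), sc (Pi.single 2 1) (Pi.single 0 1),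
    sc (Pi.single 2 1) (Pi.single 1 1)]
  ring
end
end
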